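/- For natural numbers l_i ≤ r_i and α_i > 0, the finite sum identity Σ_{j=l}^{r} C(r,j) (α−1)_{r−j} (j!)²/(j−l)! = (r! · l!/(r−l)!) · (α+l)_{r−l} holds. -/

import Mathlib

noncomputable def poch (a : ℝ) (n : ℕ) : ℝ := (ascPochhammer ℝ n).eval a

lemma poch_zero (a : ℝ) : poch a 0 = 1 := by simp [poch]

lemma poch_succ (a : ℝ) (n : ℕ) : poch a (n + 1) = poch a n * (a + n) := by
  simp [poch, ascPochhammer_succ_eval]

open Finset in
lemma poch_vandermonde (x y : ℝ) : ∀ m : ℕ,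
    ∑ ij ∈ Finset.HasAntidiagonal.antidiagonal m,
      (m.choose ij.1 : ℝ) * (poch x ij.1 * poch y ij.2) = poch (x + y) m := by
  intro m
  induction m with
  | zero => simp [poch_zero]
  | succ m ih =>
    rw [Finset.sum_antidiagonal_choose_succ_mul (fun i j => poch x i * poch y j) m]
    have h1 : ∀ ij ∈ Finset.HasAntidiagonal.antidiagonal m,
        (m.choose ij.1 : ℝ) * (poch x ij.1 * poch y (ij.2 + 1)) +
          (m.choose ij.2 : ℝ) * (poch x (ij.1 + 1) * poch y ij.2) =
        (m.choose ij.1 : ℝ) * (poch x ij.1 * poch y ij.2) * (x + y + m) := by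
      intro ij hij
      have hm : ij.1 + ij.2 = m := Finset.HasAntidiagonal.mem_antidiagonal.mp hij
      have hsym : m.choose ij.2 = m.choose ij.1 :=
        Nat.choose_symm_of_eq_add (by omega)
      rw [poch_succ, poch_succ, hsym]
      have hcast : (ij.1 : ℝ) + ij.2 = m := by exact_mod_cast congrArg Nat.cast hm
      linear_combination ((m.choose ij.1 : ℝ) * poch x ij.1 * poch y ij.2) * hcast
    rw [← Finset.sum_add_distrib, Finset.sum_congr rfl h1, ← Finset.sum_mul, ih, poch_succ]

theorem finite_sum_poch_identity (α : ℝ) (hα : 0 < α) (l r : ℕ) (hlr : l ≤ r) :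
    ∑ j ∈ Finset.Icc l r,
        (r.choose j : ℝ) * poch (α - 1) (r - j) * ((j.factorial : ℝ)) ^ 2 /
          ((j - l).factorial : ℝ) =
      (r.factorial : ℝ) * (l.factorial : ℝ) / ((r - l).factorial : ℝ) *
        poch (α + l) (r - l) := by
  set m := r - l with hm
  have hxy : ((l : ℝ) + 1) + (α - 1) = α + l := by ring
  rw [← hxy, ← poch_vandermonde ((l : ℝ) + 1) (α - 1) m,
    Finset.Nat.sum_antidiagonal_eq_sum_range_succ_mk, Finset.mul_sum,
    ← Finset.Ico_add_one_right_eq_Icc, Finset.sum_Ico_eq_sum_range]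
  have hr1 : r + 1 - l = m + 1 := by omega
  rw [hr1]
  refine Finset.sum_congr rfl ?_
  intro k hk
  have hk' : k ≤ m := by simpa using Nat.lt_succ_iff.mp (Finset.mem_range.mp hk)
  set j := l + k with hj
  have hjr : j ≤ r := by omega
  have h1 : r - j = m - k := by omega
  have h2 : j - l = k := by omega
  rw [h1, h2]
  have hC : (r.choose j : ℝ) = (r.factorial : ℝ) / ((j.factorial : ℝ) * ((m - k).factorial : ℝ)) := by
    rw [eq_div_iff (by positivity), ← mul_assoc]
    have := Nat.choose_mul_factorial_mul_factorial hjr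
    rw [h1] at this
    exact_mod_cast congrArg Nat.cast this
  have hC2 : ((m.choose k : ℕ) : ℝ) = (m.factorial : ℝ) / ((k.factorial : ℝ) * ((m - k).factorial : ℝ)) := by
    rw [eq_div_iff (by positivity), ← mul_assoc]
    exact_mod_cast congrArg Nat.cast (Nat.choose_mul_factorial_mul_factorial hk')
  have hx : poch ((l : ℝ) + 1) k = (j.factorial : ℝ) / (l.factorial : ℝ) := by
    rw [eq_div_iff (by positivity)]
    have := factorial_mul_ascPochhammer ℝ l k
    rw [hj, poch, mul_comm]
    push_cast at this ⊢
    linarith [this]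
  rw [hC, hC2, hx]
  have f1 : ((j.factorial : ℕ) : ℝ) ≠ 0 := by positivity
  have f2 : (((m - k).factorial : ℕ) : ℝ) ≠ 0 := by positivity
  have f3 : ((k.factorial : ℕ) : ℝ) ≠ 0 := by positivity
  have f4 : ((l.factorial : ℕ) : ℝ) ≠ 0 := by positivity
  have f5 : ((m.factorial : ℕ) : ℝ) ≠ 0 := by positivity
  field_simp
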